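/- Let V : [0,1] → ℝ be continuous increasing and concave on [μ_e, 1], V constant on [0, μ_e], and V̄ affine with V̄(0) ≤ V(0) and V̄(1) ≥ V(1). Suppose μ₁ ∈ (μ_e, 1) satisfies cav(V)(μ₁) ≥ V̄(μ₁) but (1-μ₁)·V(0) + μ₁·V(1) < V̄(μ₁) (full disclosure fails the participation constraint). Then there exists h(μ₁) ∈ (μ_e, 1) solving (1 - μ₁/h)·V(0) + (μ₁/h)·V(h) = V̄(μ₁), and for any binary Bayes-plausible signal {x, y} with y ≤ μ_e ≤ x and ((x-μ₁)/(x-y))·V(y) + ((μ₁-y)/(x-y))·V(x) ≥ V̄(μ₁), one has x ≤ h(μ₁). -/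

import Mathlib

open Set

theorem stmt_8 (V Vbar : ℝ → ℝ) (μ_e μ₁ : ℝ)
    (hVc : Continuous V) (hVmono : MonotoneOn V (Icc (0:ℝ) 1))
    (hVconc : ConcaveOn ℝ (Icc μ_e 1) V)
    (hconst : ∀ μ ∈ Icc (0:ℝ) μ_e, V μ = V 0)
    (haff : ∀ μ, Vbar μ = Vbar 0 + (Vbar 1 - Vbar 0) * μ)
    (hfear : Vbar 0 ≤ V 0) (hbar1 : V 1 ≤ Vbar 1)
    (hμe : μ_e ∈ Ioo (0:ℝ) 1) (hμ₁ : μ₁ ∈ Ioo μ_e 1)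
    (hM : ∃ x ∈ Icc μ_e 1, ∃ y ∈ Icc (0:ℝ) μ_e, y ≤ μ₁ ∧ μ₁ ≤ x ∧ y < x ∧
      Vbar μ₁ ≤ ((x - μ₁) / (x - y)) * V y + ((μ₁ - y) / (x - y)) * V x)
    (hD : (1 - μ₁) * V 0 + μ₁ * V 1 < Vbar μ₁) :
    ∃ h ∈ Ioo μ_e 1,
      (1 - μ₁ / h) * V 0 + (μ₁ / h) * V h = Vbar μ₁ ∧
      ∀ x ∈ Icc μ_e 1, ∀ y ∈ Icc (0:ℝ) μ_e, y ≤ μ₁ → μ₁ ≤ x → y < x →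
        Vbar μ₁ ≤ ((x - μ₁) / (x - y)) * V y + ((μ₁ - y) / (x - y)) * V x → x ≤ h := by
  obtain ⟨hμe0, hμe1⟩ := hμe
  obtain ⟨hμ₁e, hμ₁1⟩ := hμ₁
  have hμ₁0 : (0:ℝ) < μ₁ := hμe0.trans hμ₁e
  set c := Vbar μ₁ with hc
  set g : ℝ → ℝ := fun x => (1 - μ₁ / x) * V 0 + (μ₁ / x) * V x with hg
  -- key step: feasibility implies g x ≥ c
  have key : ∀ x ∈ Icc μ_e 1, ∀ y ∈ Icc (0:ℝ) μ_e, y ≤ μ₁ → μ₁ ≤ x → y < x →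
      c ≤ ((x - μ₁) / (x - y)) * V y + ((μ₁ - y) / (x - y)) * V x → c ≤ g x := by
    intro x hx y hy hyμ hμx hyx hpay
    have hx0 : (0:ℝ) < x := hμ₁0.trans_le hμx
    have hxy : (0:ℝ) < x - y := sub_pos.mpr hyx
    have hVy : V y = V 0 := hconst y hy
    have hVx : V 0 ≤ V x := by
      apply hVmono ⟨le_refl 0, zero_le_one⟩ ⟨le_of_lt hx0, hx.2⟩ (le_of_lt hx0)
    have hw : (μ₁ - y) / (x - y) ≤ μ₁ / x := by
      rw [div_le_div_iff₀ hxy hx0]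
      nlinarith [hy.1, hyx]
    have hsplit : (x - μ₁) / (x - y) = 1 - (μ₁ - y) / (x - y) := by
      field_simp
      ring
    rw [hVy, hsplit] at hpay
    have : ((μ₁ / x) - (μ₁ - y) / (x - y)) * (V x - V 0) ≥ 0 :=
      mul_nonneg (sub_nonneg.mpr hw) (sub_nonneg.mpr hVx)
    simp only [hg]
    nlinarith [this]
  obtain ⟨x₀, hx₀, y₀, hy₀, hyμ₀, hμx₀, hyx₀, hpay₀⟩ := hM
  have hgx₀ : c ≤ g x₀ := key x₀ hx₀ y₀ hy₀ hyμ₀ hμx₀ hyx₀ hpay₀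
  have hg1 : g 1 < c := by simp only [hg]; simpa using hD
  -- continuity of g on [μ₁, 1]
  have hgcont : ContinuousOn g (Icc μ₁ 1) := by
    have hne : ∀ z ∈ Icc μ₁ 1, z ≠ 0 := fun z hz => ne_of_gt (hμ₁0.trans_le hz.1)
    have hdiv : ContinuousOn (fun z : ℝ => μ₁ / z) (Icc μ₁ 1) :=
      ContinuousOn.div continuousOn_const continuousOn_id hne
    exact ((continuousOn_const.sub hdiv).mul continuousOn_const).add
      (hdiv.mul hVc.continuousOn)
  -- the set of feasible upper posteriors
  set S : Set ℝ := {z ∈ Icc μ₁ 1 | c ≤ g z} with hS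
  have hSsub : S ⊆ Icc μ₁ 1 := fun z hz => hz.1
  have hSne : S.Nonempty := ⟨x₀, ⟨hμx₀, hx₀.2⟩, hgx₀⟩
  have hSclosed : IsClosed S := by
    have : S = Icc μ₁ 1 ∩ g ⁻¹' (Ici c) := by
      ext z; simp [hS, Set.mem_setOf_eq, and_comm]
    rw [this]
    exact hgcont.preimage_isClosed_of_isClosed isClosed_Icc isClosed_Ici
  have hScomp : IsCompact S := isCompact_Icc.of_isClosed_subset hSclosed hSsub
  set h := sSup S with hh
  have hhS : h ∈ S := hScomp.sSup_mem hSne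
  have hh1 : h < 1 := by
    rcases lt_or_eq_of_le hhS.1.2 with h1 | h1
    · exact h1
    · exfalso; have := hhS.2; rw [h1] at this; linarith
  have hhμ : μ₁ ≤ h := hhS.1.1
  have hbdd : BddAbove S := hScomp.bddAbove
  -- IVT to show g h = c exactly
  have hgh : g h = c := by
    have hsub : Icc (g 1) (g h) ⊆ g '' Icc h 1 := by
      apply intermediate_value_Icc' (le_of_lt hh1)
      exact hgcont.mono (Icc_subset_Icc hhμ le_rfl)
    obtain ⟨z, hz, hgz⟩ := hsub ⟨le_of_lt hg1, hhS.2⟩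
    have hzS : z ∈ S := ⟨⟨hhμ.trans hz.1, hz.2⟩, le_of_eq hgz.symm⟩
    have : z ≤ h := le_csSup hbdd hzS
    have hzh : z = h := le_antisymm this hz.1
    rw [← hzh, hgz]
  refine ⟨h, ⟨hμ₁e.trans_le hhμ, hh1⟩, hgh, ?_⟩
  intro x hx y hy hyμ hμx hyx hpay
  exact le_csSup hbdd ⟨⟨hμx, hx.2⟩, key x hx y hy hyμ hμx hyx hpay⟩
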